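/- Suppose all entries of Γ are nonnegative, γ_k · (Σ_{j∈N} Γ_{kj}) < 1 with γ_k > 0 for every k ∈ N₂, a_i > Σ_{j≠i,j∈N} Γ_{ij} with a_i > 0 for every i ∈ N₁, and a_i + Σ_{j≠i,j∈N} Γ_{ij} > 2 − 2γ_kΓ_{kk} for all i ∈ N₁ and k ∈ N₂. Then the induced ∞-norm of Γ̄ (maximum absolute row sum) satisfies ‖Γ̄‖_∞ = max_{i∈N₁} (a_i + Σ_{j≠i,j∈N} Γ_{ij}), and consequently max_{i∈N₁} a_i ≤ ‖Γ̄‖_∞ ≤ 2 · max_{i∈N₁} a_i. -/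
import Mathlib


open Matrix Finset Filter Topology

section Defs

variable {m n : ℕ}

/-- Γ̃ ∈ ℝ^{m×N}: rows of the game players. Γ̃_{ii} = a_i, Γ̃_{ij} = Γ_{ij} for j ≠ i. -/
def GammaTilde (Γ : Matrix (Fin m ⊕ Fin n) (Fin m ⊕ Fin n) ℝ) (a : Fin m → ℝ) :
    Matrix (Fin m) (Fin m ⊕ Fin n) ℝ :=
  Matrix.of fun i j => if j = Sum.inl i then a i else Γ (Sum.inl i) j

/-- Γ̂ ∈ ℝ^{n×N}: rows of the target seekers. Γ̂_{kk} = 1 - γ_kΓ_{kk}, Γ̂_{kj} = -γ_kΓ_{kj}. -/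
def GammaHat (Γ : Matrix (Fin m ⊕ Fin n) (Fin m ⊕ Fin n) ℝ) (γ : Fin n → ℝ) :
    Matrix (Fin n) (Fin m ⊕ Fin n) ℝ :=
  Matrix.of fun k j =>
    if j = Sum.inr k then 1 - γ k * Γ (Sum.inr k) (Sum.inr k) else -(γ k * Γ (Sum.inr k) j)

/-- Γ̄ ∈ ℝ^{N×N}: Γ̃ stacked above Γ̂. -/
def GammaBar (Γ : Matrix (Fin m ⊕ Fin n) (Fin m ⊕ Fin n) ℝ) (a : Fin m → ℝ) (γ : Fin n → ℝ) :
    Matrix (Fin m ⊕ Fin n) (Fin m ⊕ Fin n) ℝ :=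
  Matrix.fromRows (GammaTilde Γ a) (GammaHat Γ γ)

/-- b̃ ∈ ℝ^m: b̃_i = a_iβ_i/α_i - n_{0,i}. -/
noncomputable def bTilde (n0 : Fin m ⊕ Fin n → ℝ) (α β a : Fin m → ℝ) : Fin m → ℝ :=
  fun i => a i * β i / α i - n0 (Sum.inl i)

/-- b̂ ∈ ℝ^n: b̂_k = γ_k n_{0,k}. -/
def bHat (n0 : Fin m ⊕ Fin n → ℝ) (γ : Fin n → ℝ) : Fin n → ℝ :=
  fun k => γ k * n0 (Sum.inr k)

/-- b̄ ∈ ℝ^N: b̃ stacked above b̂. -/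
noncomputable def bBar (n0 : Fin m ⊕ Fin n → ℝ) (α β a : Fin m → ℝ) (γ : Fin n → ℝ) : Fin m ⊕ Fin n → ℝ :=
  Sum.elim (bTilde n0 α β a) (bHat n0 γ)

/-- max norm of a vector -/
noncomputable def vecNormInf {ι : Type*} [Fintype ι] (v : ι → ℝ) : ℝ := ⨆ i, |v i|

/-- induced ∞-norm of a matrix: max absolute row sum -/
noncomputable def matNormInf {ι κ : Type*} [Fintype ι] [Fintype κ] (A : Matrix ι κ ℝ) : ℝ :=
  ⨆ i, ∑ j, |A i j|

/-- iteration map of the distributed algorithm -/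
noncomputable def iterMap (Γ : Matrix (Fin m ⊕ Fin n) (Fin m ⊕ Fin n) ℝ)
    (n0 : Fin m ⊕ Fin n → ℝ) (α β a : Fin m → ℝ) (γ : Fin n → ℝ) :
    (Fin m ⊕ Fin n → ℝ) → (Fin m ⊕ Fin n → ℝ) := fun u =>
  Sum.elim
    (fun i => β i / α i -
      (1 / a i) * (n0 (Sum.inl i) + ∑ j ∈ univ.erase (Sum.inl i), Γ (Sum.inl i) j * u j))
    (fun k => (γ k / (1 - γ k * Γ (Sum.inr k) (Sum.inr k))) *
      (n0 (Sum.inr k) + ∑ j ∈ univ.erase (Sum.inr k), Γ (Sum.inr k) j * u j))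

end Defs

section Aux

variable {m n : ℕ}

lemma rowsum_inl (Γ : Matrix (Fin m ⊕ Fin n) (Fin m ⊕ Fin n) ℝ) (hΓ : ∀ i j, 0 ≤ Γ i j)
    (a : Fin m → ℝ) (γ : Fin n → ℝ) (hapos : ∀ i, 0 < a i) (i : Fin m) :
    ∑ j, |GammaBar Γ a γ (Sum.inl i) j| =
      a i + ∑ j ∈ univ.erase (Sum.inl i), Γ (Sum.inl i) j := by
  rw [← Finset.add_sum_erase univ _ (mem_univ (Sum.inl i))]
  congr 1
  · simp [GammaBar, GammaTilde, abs_of_pos (hapos i)]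
  · apply Finset.sum_congr rfl
    intro j hj
    have hj' : j ≠ Sum.inl i := (Finset.mem_erase.mp hj).1
    simp [GammaBar, GammaTilde, hj', abs_of_nonneg (hΓ _ _)]

lemma rowsum_inr (Γ : Matrix (Fin m ⊕ Fin n) (Fin m ⊕ Fin n) ℝ) (hΓ : ∀ i j, 0 ≤ Γ i j)
    (a : Fin m → ℝ) (γ : Fin n → ℝ) (hγpos : ∀ k, 0 < γ k)
    (hγ : ∀ k : Fin n, γ k * ∑ j, Γ (Sum.inr k) j < 1) (k : Fin n) :
    ∑ j, |GammaBar Γ a γ (Sum.inr k) j| =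
      1 + γ k * ∑ j, Γ (Sum.inr k) j - 2 * (γ k * Γ (Sum.inr k) (Sum.inr k)) := by
  have hkk : γ k * Γ (Sum.inr k) (Sum.inr k) ≤ γ k * ∑ j, Γ (Sum.inr k) j := by
    apply mul_le_mul_of_nonneg_left _ (hγpos k).le
    exact Finset.single_le_sum (fun j _ => hΓ _ j) (mem_univ _)
  have h1 : 0 ≤ 1 - γ k * Γ (Sum.inr k) (Sum.inr k) := by
    linarith [hγ k]
  rw [← Finset.add_sum_erase univ _ (mem_univ (Sum.inr k))]
  have h2 : ∑ j ∈ univ.erase (Sum.inr k), |GammaBar Γ a γ (Sum.inr k) j|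
      = ∑ j ∈ univ.erase (Sum.inr k), γ k * Γ (Sum.inr k) j := by
    apply Finset.sum_congr rfl
    intro j hj
    have hj' : j ≠ Sum.inr k := (Finset.mem_erase.mp hj).1
    simp [GammaBar, GammaHat, hj', abs_of_nonneg (mul_nonneg (hγpos k).le (hΓ _ _))]
  rw [h2]
  have h3 : |GammaBar Γ a γ (Sum.inr k) (Sum.inr k)|
      = 1 - γ k * Γ (Sum.inr k) (Sum.inr k) := by
    simp [GammaBar, GammaHat, abs_of_nonneg h1]
  rw [h3, ← Finset.mul_sum,
    ← Finset.add_sum_erase univ (fun j => Γ (Sum.inr k) j) (mem_univ (Sum.inr k))]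
  ring

end Aux

/-- ‖Γ̄‖_∞ = max_{i∈N₁}(a_i + Σ_{j≠i}Γ_{ij}), and consequently
max_{i∈N₁} a_i ≤ ‖Γ̄‖_∞ ≤ 2 max_{i∈N₁} a_i. -/
theorem statement8 (m n : ℕ) (hm : 0 < m) (hn : 0 < n)
    (Γ : Matrix (Fin m ⊕ Fin n) (Fin m ⊕ Fin n) ℝ) (hΓ : ∀ i j, 0 ≤ Γ i j)
    (a : Fin m → ℝ) (γ : Fin n → ℝ)
    (hapos : ∀ i, 0 < a i) (hγpos : ∀ k, 0 < γ k)
    (hγ : ∀ k : Fin n, γ k * ∑ j, Γ (Sum.inr k) j < 1)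
    (ha : ∀ i : Fin m, ∑ j ∈ univ.erase (Sum.inl i), Γ (Sum.inl i) j < a i)
    (hTS : ∀ (i : Fin m) (k : Fin n),
      2 - 2 * γ k * Γ (Sum.inr k) (Sum.inr k) <
        a i + ∑ j ∈ univ.erase (Sum.inl i), Γ (Sum.inl i) j) :
    matNormInf (GammaBar Γ a γ) =
      (⨆ i : Fin m, a i + ∑ j ∈ univ.erase (Sum.inl i), Γ (Sum.inl i) j) ∧
    (⨆ i : Fin m, a i) ≤ matNormInf (GammaBar Γ a γ) ∧
    matNormInf (GammaBar Γ a γ) ≤ 2 * ⨆ i : Fin m, a i := by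
  haveI : Nonempty (Fin m) := Fin.pos_iff_nonempty.mp hm
  haveI : Nonempty (Fin n) := Fin.pos_iff_nonempty.mp hn
  set f : Fin m → ℝ := fun i => a i + ∑ j ∈ univ.erase (Sum.inl i), Γ (Sum.inl i) j with hf
  have hbdd : BddAbove (Set.range f) := Finite.bddAbove_range f
  have hbddrow : BddAbove (Set.range fun x => ∑ j, |GammaBar Γ a γ x j|) :=
    Finite.bddAbove_range _
  have hbdda : BddAbove (Set.range a) := Finite.bddAbove_range a
  have key : matNormInf (GammaBar Γ a γ) = ⨆ i : Fin m, f i := by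
    apply le_antisymm
    · apply ciSup_le
      rintro (i | k)
      · rw [rowsum_inl Γ hΓ a γ hapos i]
        exact le_ciSup hbdd i
      · rw [rowsum_inr Γ hΓ a γ hγpos hγ k]
        obtain ⟨i0⟩ := (inferInstance : Nonempty (Fin m))
        have h1 : 1 + γ k * ∑ j, Γ (Sum.inr k) j - 2 * (γ k * Γ (Sum.inr k) (Sum.inr k))
            ≤ f i0 := by
          have := hTS i0 k
          have := hγ k
          simp only [hf]
          linarith
        exact h1.trans (le_ciSup hbdd i0)
    · apply ciSup_le
      intro i
      simp only [hf]
      rw [← rowsum_inl Γ hΓ a γ hapos i]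
      exact le_ciSup hbddrow (Sum.inl i)
  refine ⟨key, ?_, ?_⟩
  · rw [key]
    apply ciSup_le
    intro i
    have : a i ≤ f i := by
      have : 0 ≤ ∑ j ∈ univ.erase (Sum.inl i), Γ (Sum.inl i) j :=
        Finset.sum_nonneg fun j _ => hΓ _ _
      simp only [hf]; linarith
    exact this.trans (le_ciSup hbdd i)
  · rw [key]
    apply ciSup_le
    intro i
    have h1 : f i ≤ 2 * a i := by
      have := ha i
      simp only [hf]; linarith
    have h2 : a i ≤ ⨆ i, a i := le_ciSup hbdda i
    linarith
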